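/- For the Bell-state measurement Φ = (|Φ^b⟩⟨Φ^b|)_{b=0}^3 on C²⊗C², the separability threshold satisfies Q_sep(Φ) = 1/2: any separable 4-outcome POVM (F^b) satisfies (1/4)Σ_b Tr(F^b Φ^b) ≤ 1/2, and this value is attained by a separable measurement. -/

import Mathlib

open Matrix ComplexOrder

noncomputable section

def IsSeparableOp (F : Matrix (Fin 2 × Fin 2) (Fin 2 × Fin 2) ℂ) : Prop :=
  ∃ (K : ℕ) (lam : Fin K → ℝ) (u : Fin K → Fin 2 → ℂ) (v : Fin K → Fin 2 → ℂ),
    (∀ k, 0 ≤ lam k) ∧ (∀ k, ∑ i, ‖u k i‖ ^ 2 = 1) ∧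
    (∀ k, ∑ i, ‖v k i‖ ^ 2 = 1) ∧
    F = ∑ k, (lam k : ℂ) •
      Matrix.vecMulVec (fun p => u k p.1 * v k p.2) (star fun p => u k p.1 * v k p.2)

def IsSeparablePOVM {d : ℕ} (F : Fin d → Matrix (Fin 2 × Fin 2) (Fin 2 × Fin 2) ℂ) : Prop :=
  (∀ j, IsSeparableOp (F j)) ∧ ∑ j, F j = 1

/-- Computational basis vector |i j⟩ of the two-qubit space. -/
def ket (i j : Fin 2) : Fin 2 × Fin 2 → ℂ := fun p => if p = (i, j) then 1 else 0

/-- The four Bell state vectors Φ⁰ = φ⁺, Φ¹ = φ⁻, Φ² = ψ⁺, Φ³ = ψ⁻. -/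
def bellVec : Fin 4 → Fin 2 × Fin 2 → ℂ
  | 0 => ((Real.sqrt 2)⁻¹ : ℂ) • (ket 0 0 + ket 1 1)
  | 1 => ((Real.sqrt 2)⁻¹ : ℂ) • (ket 0 0 - ket 1 1)
  | 2 => ((Real.sqrt 2)⁻¹ : ℂ) • (ket 0 1 + ket 1 0)
  | 3 => ((Real.sqrt 2)⁻¹ : ℂ) • (ket 0 1 - ket 1 0)

/-- The Bell state projectors. -/
def bellProj (b : Fin 4) : Matrix (Fin 2 × Fin 2) (Fin 2 × Fin 2) ℂ :=
  Matrix.vecMulVec (bellVec b) (star (bellVec b))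

/-! ### Auxiliary lemmas -/

lemma rk1 (w φ : Fin 2 × Fin 2 → ℂ) :
    (vecMulVec w (star w) * vecMulVec φ (star φ)).trace
    = (∑ p, (starRingEnd ℂ) (φ p) * w p) * (starRingEnd ℂ) (∑ p, (starRingEnd ℂ) (φ p) * w p) := by
  simp only [Matrix.trace, Matrix.diag, Matrix.mul_apply, Matrix.vecMulVec_apply, Pi.star_apply,
    map_sum, _root_.map_mul, Complex.conj_conj, Finset.sum_mul_sum, Complex.star_def]
  refine Finset.sum_congr rfl fun i _ => Finset.sum_congr rfl fun j _ => ?_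
  ring

lemma rk1_normSq (w φ : Fin 2 × Fin 2 → ℂ) :
    (vecMulVec w (star w) * vecMulVec φ (star φ)).trace
    = (Complex.normSq (∑ p, (starRingEnd ℂ) (φ p) * w p) : ℂ) := by
  rw [rk1, Complex.mul_conj]

lemma rk1tr (w : Fin 2 × Fin 2 → ℂ) :
    (vecMulVec w (star w)).trace = ∑ p, (Complex.normSq (w p) : ℂ) := by
  simp [Matrix.trace, Matrix.diag, Matrix.vecMulVec_apply, Complex.mul_conj, Complex.star_def]

lemma overlap_bound (b : Fin 4) (u v : Fin 2 → ℂ) (hu : ∑ i, ‖u i‖ ^ 2 = 1)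
    (hv : ∑ i, ‖v i‖ ^ 2 = 1) :
    Complex.normSq (∑ p : Fin 2 × Fin 2, (starRingEnd ℂ) (bellVec b p) * (u p.1 * v p.2)) ≤ 1/2 := by
  have hu2 : ‖u 0‖ ^ 2 + ‖u 1‖ ^ 2 = 1 := by
    simpa [Fin.sum_univ_two] using hu
  have hv2 : ‖v 0‖ ^ 2 + ‖v 1‖ ^ 2 = 1 := by
    simpa [Fin.sum_univ_two] using hv
  have key : ∀ (z w : ℂ) (x0 x1 y0 y1 : ℝ), 0 ≤ x0 → 0 ≤ x1 → 0 ≤ y0 → 0 ≤ y1 →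
      x0^2 + x1^2 = 1 → y0^2 + y1^2 = 1 → ‖z‖ = x0*y0 → ‖w‖ = x1*y1 →
      Complex.normSq (((Real.sqrt 2 : ℝ) : ℂ)⁻¹ * (z + w)) ≤ 1/2 := by
    intro z w x0 x1 y0 y1 h0 h1 h2 h3 hx hy hz hw
    rw [Complex.normSq_mul, map_inv₀, Complex.normSq_ofReal,
      Real.mul_self_sqrt (by norm_num : (0:ℝ) ≤ 2)]
    have habs : ‖z + w‖ ≤ x0*y0 + x1*y1 := by
      calc ‖z + w‖ ≤ ‖z‖ + ‖w‖ := norm_add_le _ _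
      _ = x0*y0 + x1*y1 := by rw [hz, hw]
    have hcs : (x0*y0 + x1*y1)^2 ≤ 1 := by nlinarith [sq_nonneg (x0*y1 - x1*y0)]
    have hn := Complex.sq_norm (z + w)
    nlinarith [norm_nonneg (z + w), mul_nonneg (mul_nonneg h0 h2) (mul_nonneg h1 h3)]
  have habsm : ∀ i j : Fin 2, ‖u i * v j‖ = ‖u i‖ * ‖v j‖ :=
    fun i j => by rw [norm_mul]
  fin_cases b <;>
    simp only [bellVec, Fintype.sum_prod_type, Fin.sum_univ_two, ket, Pi.smul_apply, Pi.add_apply,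
      Pi.sub_apply, smul_eq_mul, Prod.mk.injEq, _root_.map_mul, map_add, map_sub,
      Complex.conj_ofReal] <;> norm_num
  · rw [← mul_add]
    exact key _ _ _ _ _ _ (norm_nonneg _) (norm_nonneg _) (norm_nonneg _)
      (norm_nonneg _) hu2 hv2 (habsm 0 0) (habsm 1 1)
  · rw [show (((Real.sqrt 2:ℝ):ℂ))⁻¹ * (u 0 * v 0) + -((((Real.sqrt 2:ℝ):ℂ))⁻¹ * (u 1 * v 1))
        = (((Real.sqrt 2:ℝ):ℂ))⁻¹ * (u 0 * v 0 + -(u 1 * v 1)) from by ring]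
    exact key _ _ _ _ _ _ (norm_nonneg _) (norm_nonneg _) (norm_nonneg _)
      (norm_nonneg _) hu2 hv2 (habsm 0 0) (by rw [norm_neg]; exact habsm 1 1)
  · rw [← mul_add]
    exact key _ _ _ _ _ _ (norm_nonneg _) (norm_nonneg _) (norm_nonneg _)
      (norm_nonneg _) hu2 (by linarith [hv2] : ‖v 1‖^2 + ‖v 0‖^2 = 1)
      (habsm 0 1) (habsm 1 0)
  · rw [show (((Real.sqrt 2:ℝ):ℂ))⁻¹ * (u 0 * v 1) + -((((Real.sqrt 2:ℝ):ℂ))⁻¹ * (u 1 * v 0))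
        = (((Real.sqrt 2:ℝ):ℂ))⁻¹ * (u 0 * v 1 + -(u 1 * v 0)) from by ring]
    exact key _ _ _ _ _ _ (norm_nonneg _) (norm_nonneg _) (norm_nonneg _)
      (norm_nonneg _) hu2 (by linarith [hv2] : ‖v 1‖^2 + ‖v 0‖^2 = 1)
      (habsm 0 1) (by rw [norm_neg]; exact habsm 1 0)

/-- key per-outcome bound -/
lemma outcome_bound (b : Fin 4) (M : Matrix (Fin 2 × Fin 2) (Fin 2 × Fin 2) ℂ)
    (hM : IsSeparableOp M) :
    ((M * bellProj b).trace).re ≤ (1/2) * (M.trace).re := by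
  obtain ⟨K, lam, u, v, hlam, hu, hv, hF⟩ := hM
  have htr1 : (M * bellProj b).trace
      = ∑ k, (lam k : ℂ) * (Complex.normSq (∑ p : Fin 2 × Fin 2,
          (starRingEnd ℂ) (bellVec b p) * (u k p.1 * v k p.2)) : ℂ) := by
    rw [hF, Finset.sum_mul, Matrix.trace_sum]
    refine Finset.sum_congr rfl fun k _ => ?_
    rw [Matrix.smul_mul, Matrix.trace_smul, bellProj, rk1_normSq]
    simp [smul_eq_mul]
  have htr2 : M.trace = ∑ k, (lam k : ℂ) := by
    rw [hF, Matrix.trace_sum]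
    refine Finset.sum_congr rfl fun k _ => ?_
    rw [Matrix.trace_smul, rk1tr, smul_eq_mul]
    have : (∑ p : Fin 2 × Fin 2, (Complex.normSq (u k p.1 * v k p.2) : ℂ)) = 1 := by
      have hsum : (∑ p : Fin 2 × Fin 2, (Complex.normSq (u k p.1 * v k p.2) : ℝ))
          = (∑ i, Complex.normSq (u k i)) * (∑ j, Complex.normSq (v k j)) := by
        rw [Fintype.sum_prod_type, Finset.sum_mul_sum]
        exact Finset.sum_congr rfl fun i _ => Finset.sum_congr rfl fun j _ => by
          rw [Complex.normSq_mul]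
      have hu1 : (∑ i, Complex.normSq (u k i)) = 1 := by
        rw [← hu k]; exact Finset.sum_congr rfl fun i _ => (Complex.sq_norm _).symm
      have hv1 : (∑ j, Complex.normSq (v k j)) = 1 := by
        rw [← hv k]; exact Finset.sum_congr rfl fun j _ => (Complex.sq_norm _).symm
      have : (∑ p : Fin 2 × Fin 2, (Complex.normSq (u k p.1 * v k p.2) : ℝ)) = 1 := by
        rw [hsum, hu1, hv1, one_mul]
      calc (∑ p : Fin 2 × Fin 2, (Complex.normSq (u k p.1 * v k p.2) : ℂ))
          = ((∑ p : Fin 2 × Fin 2, (Complex.normSq (u k p.1 * v k p.2) : ℝ) : ℝ) : ℂ) := by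
            push_cast; ring
        _ = 1 := by rw [this]; norm_num
    rw [this, mul_one]
  rw [htr1, htr2]
  rw [Complex.re_sum, Complex.re_sum]
  have : ∀ k : Fin K, (((lam k : ℂ) * ((Complex.normSq (∑ p : Fin 2 × Fin 2,
      (starRingEnd ℂ) (bellVec b p) * (u k p.1 * v k p.2)) : ℝ) : ℂ)).re)
      = lam k * Complex.normSq (∑ p : Fin 2 × Fin 2,
          (starRingEnd ℂ) (bellVec b p) * (u k p.1 * v k p.2)) := by
    intro k
    rw [← Complex.ofReal_mul, Complex.ofReal_re]
  rw [Finset.sum_congr rfl fun k _ => this k]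
  rw [Finset.mul_sum]
  refine Finset.sum_le_sum fun k _ => ?_
  have hb := overlap_bound b (u k) (v k) (hu k) (hv k)
  have := mul_le_mul_of_nonneg_left hb (hlam k)
  simpa [Complex.ofReal_re, mul_comm] using this

/-- the attaining measurement: projections onto the computational basis -/
def pairOf : Fin 4 → Fin 2 × Fin 2
  | 0 => (0, 0)
  | 1 => (1, 1)
  | 2 => (0, 1)
  | 3 => (1, 0)

def Gmeas (b : Fin 4) : Matrix (Fin 2 × Fin 2) (Fin 2 × Fin 2) ℂ :=
  Matrix.vecMulVec (ket (pairOf b).1 (pairOf b).2) (star (ket (pairOf b).1 (pairOf b).2))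

theorem qsep_bell_state_measurement :
    (∀ F : Fin 4 → Matrix (Fin 2 × Fin 2) (Fin 2 × Fin 2) ℂ, IsSeparablePOVM F →
      (1 / 4 : ℝ) * ∑ b, ((F b * bellProj b).trace).re ≤ 1 / 2) ∧
    (∃ F : Fin 4 → Matrix (Fin 2 × Fin 2) (Fin 2 × Fin 2) ℂ, IsSeparablePOVM F ∧
      (1 / 4 : ℝ) * ∑ b, ((F b * bellProj b).trace).re = 1 / 2) := by
  constructor
  · intro F ⟨hsep, hsum⟩
    have htr : ∑ b, ((F b).trace).re = 4 := by
      have : ∑ b, (F b).trace = 4 := by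
        rw [← Matrix.trace_sum, hsum, Matrix.trace_one]
        simp
      calc ∑ b, ((F b).trace).re = (∑ b, (F b).trace).re := (Complex.re_sum _ _).symm
      _ = 4 := by rw [this]; norm_num
    have hbd : ∀ b, ((F b * bellProj b).trace).re ≤ (1/2) * ((F b).trace).re :=
      fun b => outcome_bound b (F b) (hsep b)
    have : ∑ b, ((F b * bellProj b).trace).re ≤ ∑ b, (1/2) * ((F b).trace).re :=
      Finset.sum_le_sum fun b _ => hbd b
    rw [← Finset.mul_sum, htr] at this
    linarith
  · refine ⟨Gmeas, ⟨?_, ?_⟩, ?_⟩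
    · intro b
      refine ⟨1, fun _ => 1, fun _ i => if i = (pairOf b).1 then 1 else 0,
        fun _ j => if j = (pairOf b).2 then 1 else 0, fun _ => zero_le_one, ?_, ?_, ?_⟩
      · intro k
        fin_cases b <;> simp [Fin.sum_univ_two, pairOf]
      · intro k
        fin_cases b <;> simp [Fin.sum_univ_two, pairOf]
      · rw [Fin.sum_univ_one]
        have hw : (fun p : Fin 2 × Fin 2 =>
            (if p.1 = (pairOf b).1 then (1:ℂ) else 0) * (if p.2 = (pairOf b).2 then 1 else 0))
            = ket (pairOf b).1 (pairOf b).2 := by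
          funext p
          simp only [ket, Prod.ext_iff]
          by_cases h1 : p.1 = (pairOf b).1 <;> by_cases h2 : p.2 = (pairOf b).2 <;>
            simp [h1, h2]
        simp only [Gmeas, Complex.ofReal_one, one_smul, hw]
    · ext ⟨p1, p2⟩ ⟨q1, q2⟩
      simp only [Fin.sum_univ_four, Matrix.sum_apply, Gmeas, pairOf, Matrix.vecMulVec_apply,
        Pi.star_apply, ket, Matrix.one_apply, Prod.mk.injEq]
      fin_cases p1 <;> fin_cases p2 <;> fin_cases q1 <;> fin_cases q2 <;>
        norm_num [Prod.ext_iff]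
    · have h12 : ∀ b, ((Gmeas b * bellProj b).trace).re = 1/2 := by
        intro b
        rw [Gmeas, bellProj, rk1_normSq, Complex.ofReal_re]
        fin_cases b <;>
          simp [bellVec, ket, pairOf, Fintype.sum_prod_type, Fin.sum_univ_two,
            Complex.conj_ofReal, map_inv₀, Complex.normSq_ofReal, Complex.normSq_neg]
      rw [Fin.sum_univ_four, h12 0, h12 1, h12 2, h12 3]
      norm_num
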